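/- arXiv:0805.2852 — 2 statements merged into one kernel-verified Lean document; each statement's English description precedes it below -/
import Mathlib

section
/- The map α_1 ↦ β_1h², α_2 ↦ β_2h², α_3 ↦ -(β_1h²+β_2h²)/(1+β_1β_2h⁴) defines an injective field homomorphism from L = ℚ(α_1,α_2,α_3 ; α_1+α_2+α_3+α_1α_2α_3 = 0) into ℚ(β_1,β_2)((h)). -/
open MvPolynomial

noncomputable section SklyaninAux

namespace SklyaninAux

abbrev S : Type := MvPolynomial (Fin 2) ℚ
abbrev R3 : Type := MvPolynomial (Fin 3) ℚ
abbrev k0 : Type := FractionRing S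
abbrev K : Type := LaurentSeries k0

def fpoly : R3 := X 0 + X 1 + X 2 + X 0 * X 1 * X 2
def upoly : S := 1 + X 0 * X 1
def vpoly : S := X 0 + X 1

def E : R3 ≃ₐ[ℚ] Polynomial S :=
  (renameEquiv ℚ (finRotate 3)).trans (MvPolynomial.finSuccEquiv ℚ 2)

lemma E_X0 : E (X 0) = Polynomial.C (X 0) := by
  have h1 : (finRotate 3) (0 : Fin 3) = Fin.succ 0 := by decide
  simp only [E, AlgEquiv.trans_apply, renameEquiv_apply, rename_X, h1]
  exact finSuccEquiv_X_succ

lemma E_X1 : E (X 1) = Polynomial.C (X 1) := by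
  have h1 : (finRotate 3) (1 : Fin 3) = Fin.succ 1 := by decide
  simp only [E, AlgEquiv.trans_apply, renameEquiv_apply, rename_X, h1]
  exact finSuccEquiv_X_succ

lemma E_X2 : E (X 2) = Polynomial.X := by
  have h1 : (finRotate 3) (2 : Fin 3) = 0 := by decide
  simp [E, AlgEquiv.trans_apply, renameEquiv_apply, rename_X, h1, finSuccEquiv_X_zero]

lemma E_f : E fpoly = Polynomial.C upoly * Polynomial.X + Polynomial.C vpoly := by
  simp only [fpoly, upoly, vpoly, map_add, map_mul, E_X0, E_X1, E_X2, map_one]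
  ring

lemma upoly_ne : upoly ≠ 0 := by
  intro h
  have := congrArg MvPolynomial.constantCoeff h
  simp [upoly] at this

abbrev E2 : S ≃ₐ[ℚ] Polynomial (MvPolynomial (Fin 1) ℚ) := MvPolynomial.finSuccEquiv ℚ 1

lemma E2_X0 : E2 (X 0) = Polynomial.X := finSuccEquiv_X_zero
lemma E2_X1 : E2 (X 1) = Polynomial.C (X 0) := by
  have h : (X 1 : S) = X (Fin.succ 0) := rfl
  rw [h]
  exact finSuccEquiv_X_succ

lemma common_div_unit {r : S} (hu : r ∣ upoly) (hv : r ∣ vpoly) : IsUnit r := by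
  have d1 : r ∣ (X 0 : S) ^ 2 - 1 := by
    have : (X 0 : S) ^ 2 - 1 = X 0 * vpoly - upoly := by simp [upoly, vpoly]; ring
    rw [this]
    exact dvd_sub (hv.mul_left _) hu
  have d2 : r ∣ (X 1 : S) ^ 2 - 1 := by
    have : (X 1 : S) ^ 2 - 1 = X 1 * vpoly - upoly := by simp [upoly, vpoly]; ring
    rw [this]
    exact dvd_sub (hv.mul_left _) hu
  have hC : Polynomial.C ((X 0 : MvPolynomial (Fin 1) ℚ) ^ 2 - 1)
      = Polynomial.C (X 0 : MvPolynomial (Fin 1) ℚ) ^ 2 - 1 := by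
    rw [map_sub, map_pow, map_one]
  have e2 : E2 r ∣ Polynomial.C ((X 0 : MvPolynomial (Fin 1) ℚ) ^ 2 - 1) := by
    rw [hC]
    have := map_dvd E2 d2
    simpa [map_pow, E2_X1] using this
  have hCne : (Polynomial.C ((X 0 : MvPolynomial (Fin 1) ℚ) ^ 2 - 1)) ≠ 0 := by
    rw [Ne, Polynomial.C_eq_zero]
    intro h
    have := congrArg MvPolynomial.constantCoeff h
    simp at this
  have hdeg : (E2 r).natDegree = 0 :=
    Nat.le_zero.mp (le_trans (Polynomial.natDegree_le_of_dvd e2 hCne)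
      (by rw [Polynomial.natDegree_C]))
  obtain ⟨s, hs⟩ : ∃ s, E2 r = Polynomial.C s :=
    ⟨(E2 r).coeff 0, (Polynomial.eq_C_of_natDegree_eq_zero hdeg)⟩
  have e1 : Polynomial.C s ∣ Polynomial.X ^ 2 - 1 := by
    have := map_dvd E2 d1
    rw [hs] at this
    simpa [map_pow, E2_X0] using this
  have hsdvd : s ∣ (Polynomial.X ^ 2 - 1 : Polynomial (MvPolynomial (Fin 1) ℚ)).coeff 0 :=
    (Polynomial.C_dvd_iff_dvd_coeff _ _).mp e1 0
  have : s ∣ -1 := by simpa using hsdvd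
  have hsu : IsUnit s := isUnit_of_dvd_unit this (IsUnit.neg isUnit_one)
  have : IsUnit (E2 r) := hs ▸ (Polynomial.isUnit_C.mpr hsu)
  have := this.map E2.symm.toAlgHom
  simpa using this

lemma prime_fpoly : Prime fpoly := by
  rw [← UniqueFactorizationMonoid.irreducible_iff_prime]
  have hirr : Irreducible (E fpoly) := by
    rw [E_f]
    apply Polynomial.IsPrimitive.irreducible_of_irreducible_map_of_injective
      (IsFractionRing.injective S k0)
    · intro r hr
      rw [Polynomial.C_dvd_iff_dvd_coeff] at hr
      have h0 := hr 0
      have h1 := hr 1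
      simp [Polynomial.coeff_C] at h0 h1
      exact common_div_unit h1 h0
    · rw [Polynomial.map_add, Polynomial.map_mul, Polynomial.map_C, Polynomial.map_C,
        Polynomial.map_X]
      apply Polynomial.irreducible_of_degree_eq_one
      apply Polynomial.degree_linear
      simpa using (map_ne_zero_iff _ (IsFractionRing.injective S k0)).mpr upoly_ne
  exact (MulEquiv.irreducible_iff E.toRingEquiv.toMulEquiv).mp hirr

lemma div_aux {A : Type*} [CommRing A] (a b : A) (P : Polynomial A) :
    ∃ (m : ℕ) (r : A),
      (Polynomial.C a * Polynomial.X + Polynomial.C b) ∣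
        Polynomial.C a ^ m * P - Polynomial.C r := by
  induction P using Polynomial.induction_on' with
  | add p q hp hq =>
    obtain ⟨m1, r1, h1⟩ := hp
    obtain ⟨m2, r2, h2⟩ := hq
    refine ⟨m1 + m2, a ^ m2 * r1 + a ^ m1 * r2, ?_⟩
    have key : Polynomial.C a ^ (m1 + m2) * (p + q)
          - Polynomial.C (a ^ m2 * r1 + a ^ m1 * r2)
        = Polynomial.C a ^ m2 * (Polynomial.C a ^ m1 * p - Polynomial.C r1)
          + Polynomial.C a ^ m1 * (Polynomial.C a ^ m2 * q - Polynomial.C r2) := by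
      simp only [map_add, map_mul, map_pow]
      ring
    rw [key]
    exact dvd_add (h1.mul_left _) (h2.mul_left _)
  | monomial n c =>
    refine ⟨n, c * (-b) ^ n, ?_⟩
    have key : Polynomial.C a ^ n * (Polynomial.monomial n c) - Polynomial.C (c * (-b) ^ n)
        = Polynomial.C c * ((Polynomial.C a * Polynomial.X) ^ n - (Polynomial.C (-b)) ^ n) := by
      rw [← Polynomial.C_mul_X_pow_eq_monomial]
      simp only [map_mul, map_pow, map_neg]
      ring
    rw [key]
    have : (Polynomial.C a * Polynomial.X + Polynomial.C b) ∣
        ((Polynomial.C a * Polynomial.X) ^ n - (Polynomial.C (-b)) ^ n) := by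
      simpa using sub_dvd_pow_sub_pow (Polynomial.C a * Polynomial.X) (Polynomial.C (-b)) n
    exact this.mul_left _

def βv : Fin 2 → k0 := fun i => algebraMap S k0 (X i)

lemma aeval_βv_eq (p : S) : (MvPolynomial.aeval βv) p = algebraMap S k0 p := by
  induction p using MvPolynomial.induction_on with
  | C q =>
    rw [MvPolynomial.aeval_C,
      show (algebraMap S k0) (MvPolynomial.C q)
        = ((algebraMap S k0).comp (MvPolynomial.C : ℚ →+* S)) q from rfl,
      eq_ratCast, eq_ratCast]
  | add p q hp hq => rw [map_add, map_add, hp, hq]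
  | mul_X p i hp => rw [map_mul, map_mul, hp, MvPolynomial.aeval_X]; rfl

lemma injective_aeval_βv : Function.Injective (MvPolynomial.aeval βv : S →ₐ[ℚ] k0) := by
  have h : ⇑(MvPolynomial.aeval βv : S →ₐ[ℚ] k0) = ⇑(algebraMap S k0) :=
    _root_.funext aeval_βv_eq
  rw [h]
  exact IsFractionRing.injective S k0

lemma degree_eq (d : Fin 2 →₀ ℕ) : d.degree = d 0 + d 1 := by
  rw [Finsupp.degree, ← Fin.sum_univ_two (fun i => d i)]
  exact Finset.sum_subset (Finset.subset_univ _)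
    (fun i _ hi => Finsupp.notMem_support_iff.mp hi)

lemma algebraMap_Q_K (q : ℚ) :
    algebraMap ℚ K q = HahnSeries.single (0 : ℤ) (algebraMap ℚ k0 q) := by
  rw [eq_ratCast (algebraMap ℚ K) q, eq_ratCast (algebraMap ℚ k0) q,
    ← map_ratCast (HahnSeries.C : k0 →+* K) q, HahnSeries.C_apply]

lemma coeff_finsum {ι : Type*} (t : Finset ι) (F : ι → K) (g : ℤ) :
    (∑ d ∈ t, F d).coeff g = ∑ d ∈ t, (F d).coeff g := by
  classical
  induction t using Finset.induction_on with
  | empty => simp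
  | insert _ _ h ih => rw [Finset.sum_insert h, Finset.sum_insert h, HahnSeries.coeff_add, ih]

lemma coeff_aeval_single (γ : Fin 2 → k0) (p : S) (k : ℕ) :
    ((MvPolynomial.aeval fun i => (HahnSeries.single (2 : ℤ) (γ i) : K)) p).coeff
        ((2 * k : ℕ) : ℤ)
      = MvPolynomial.aeval γ (homogeneousComponent k p) := by
  have hterm : ∀ d ∈ p.support,
      (algebraMap ℚ K) (MvPolynomial.coeff d p)
          * ∏ i, (HahnSeries.single (2 : ℤ) (γ i) : K) ^ d i
        = HahnSeries.single ((2 * d.degree : ℕ) : ℤ)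
            ((algebraMap ℚ k0) (MvPolynomial.coeff d p) * ∏ i, γ i ^ d i) := by
    intro d _
    rw [Fin.prod_univ_two, HahnSeries.single_pow, HahnSeries.single_pow,
      HahnSeries.single_mul_single, algebraMap_Q_K,
      HahnSeries.single_mul_single, Fin.prod_univ_two]
    congr 1
    rw [degree_eq]
    push_cast
    ring
  rw [MvPolynomial.aeval_def, MvPolynomial.eval₂_eq', Finset.sum_congr rfl hterm,
    coeff_finsum, homogeneousComponent_apply, map_sum, Finset.sum_filter]
  apply Finset.sum_congr rfl
  intro d _
  rw [HahnSeries.coeff_single]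
  have hiff : (((2 * k : ℕ) : ℤ) = ((2 * d.degree : ℕ) : ℤ)) ↔ (d.degree = k) := by
    push_cast
    omega
  simp only [hiff]
  by_cases h : d.degree = k
  · rw [if_pos h, if_pos h, MvPolynomial.aeval_monomial]
    congr 1
    exact (Finsupp.prod_fintype d _ (fun i => pow_zero (γ i))).symm
  · rw [if_neg h, if_neg h]

lemma injective_theta :
    Function.Injective
      ((MvPolynomial.aeval fun i => (HahnSeries.single (2 : ℤ) (βv i) : K)) : S →ₐ[ℚ] K) := by
  rw [injective_iff_map_eq_zero]
  intro p hp
  have hcomp : ∀ k, homogeneousComponent k p = 0 := by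
    intro k
    apply injective_aeval_βv
    rw [map_zero, ← coeff_aeval_single, hp, HahnSeries.coeff_zero]
  rw [← sum_homogeneousComponent p]
  exact Finset.sum_eq_zero fun k _ => hcomp k

def a1 : K := HahnSeries.single (2 : ℤ) (βv 0)
def a2 : K := HahnSeries.single (2 : ℤ) (βv 1)
def a3 : K := -(a1 + a2) / (1 + a1 * a2)

def wv : Fin 3 → K := ![a1, a2, a3]

def ψ : R3 →ₐ[ℚ] K := MvPolynomial.aeval wv

lemma one_add_ne : (1 : K) + a1 * a2 ≠ 0 := by
  intro h
  have h0 := congrArg (fun x : K => x.coeff 0) h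
  simp only [a1, a2, HahnSeries.single_mul_single, HahnSeries.coeff_add,
    HahnSeries.coeff_zero] at h0
  rw [HahnSeries.coeff_single_of_ne (by norm_num)] at h0
  simp [HahnSeries.coeff_one] at h0

lemma psi_f : ψ fpoly = 0 := by
  have h := one_add_ne
  have hX0 : ψ (X 0) = a1 := by rw [ψ, MvPolynomial.aeval_X]; rfl
  have hX1 : ψ (X 1) = a2 := by rw [ψ, MvPolynomial.aeval_X]; rfl
  have hX2 : ψ (X 2) = a3 := by rw [ψ, MvPolynomial.aeval_X]; rfl
  simp only [fpoly, map_add, map_mul, hX0, hX1, hX2]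
  rw [a3]
  field_simp
  ring

def ι : S → R3 := fun s => E.symm (Polynomial.C s)

lemma psi_iota (s : S) :
    ψ (ι s) = (MvPolynomial.aeval fun i => (HahnSeries.single (2 : ℤ) (βv i) : K)) s := by
  have : ψ.comp ((E.symm.toAlgHom).comp (Polynomial.CAlgHom (R := ℚ) (A := S)))
      = MvPolynomial.aeval fun i => (HahnSeries.single (2 : ℤ) (βv i) : K) := by
    apply MvPolynomial.algHom_ext
    intro i
    fin_cases i
    · show ψ (E.symm (Polynomial.C (X 0))) = _
      rw [show E.symm (Polynomial.C (X 0)) = X 0 from E.injective (by rw [AlgEquiv.apply_symm_apply, E_X0])]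
      rw [ψ, MvPolynomial.aeval_X, MvPolynomial.aeval_X]
      rfl
    · show ψ (E.symm (Polynomial.C (X 1))) = _
      rw [show E.symm (Polynomial.C (X 1)) = X 1 from E.injective (by rw [AlgEquiv.apply_symm_apply, E_X1])]
      rw [ψ, MvPolynomial.aeval_X, MvPolynomial.aeval_X]
      rfl
  have h2 := congrArg (fun F => (F : S →ₐ[ℚ] K) s) this
  simpa [ι] using h2

lemma ker_psi (p : R3) (hp : ψ p = 0) : p ∈ Ideal.span {fpoly} := by
  obtain ⟨m, r, hdvd⟩ := div_aux upoly vpoly (E p)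
  have hEinv : E.symm (Polynomial.C upoly * Polynomial.X + Polynomial.C vpoly) = fpoly := by
    rw [← E_f, AlgEquiv.symm_apply_apply]
  have hpull : fpoly ∣ (ι upoly) ^ m * p - ι r := by
    have h := map_dvd E.symm.toAlgHom hdvd
    simp only [map_sub, map_mul, map_pow, AlgEquiv.coe_toAlgHom, AlgHom.coe_coe] at h
    rw [hEinv, AlgEquiv.symm_apply_apply] at h
    exact h
  have hr0 : r = 0 := by
    apply injective_theta
    rw [map_zero, ← psi_iota r]
    obtain ⟨c, hc⟩ := hpull
    have h1 : ψ ((ι upoly) ^ m * p - ι r) = 0 := by rw [hc, map_mul, psi_f, zero_mul]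
    rw [map_sub, map_mul, map_pow, hp, mul_zero, zero_sub, neg_eq_zero] at h1
    exact h1
  rw [hr0] at hpull
  have hι0 : ι (0 : S) = 0 := by rw [ι]; simp
  rw [hι0, sub_zero] at hpull
  rw [Ideal.mem_span_singleton]
  rcases prime_fpoly.2.2 _ _ hpull with h | h
  · exfalso
    have hdu : fpoly ∣ ι upoly := prime_fpoly.dvd_of_dvd_pow h
    obtain ⟨c, hc⟩ := hdu
    have h0 : ψ (ι upoly) = 0 := by rw [hc, map_mul, psi_f, zero_mul]
    rw [psi_iota upoly] at h0
    apply one_add_ne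
    rw [← h0]
    simp only [upoly, map_add, map_one, map_mul, MvPolynomial.aeval_X]
    rw [a1, a2]
  · exact h

end SklyaninAux

end SklyaninAux

section Main
open SklyaninAux
set_option maxHeartbeats 1000000
set_option synthInstance.maxHeartbeats 1000000

/-- The map `α₁ ↦ β₁h²`, `α₂ ↦ β₂h²`, `α₃ ↦ -(β₁h²+β₂h²)/(1+β₁β₂h⁴)` defines an
injective field homomorphism from
`L = ℚ(α₁,α₂,α₃ ; α₁+α₂+α₃+α₁α₂α₃ = 0)` into `ℚ(β₁,β₂)((h))`. -/
theorem sklyanin_parameter_field_embedding :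
    let Q := MvPolynomial (Fin 3) ℚ ⧸
      Ideal.span {(X 0 + X 1 + X 2 + X 0 * X 1 * X 2 : MvPolynomial (Fin 3) ℚ)}
    let L := FractionRing Q
    let k0 := FractionRing (MvPolynomial (Fin 2) ℚ)
    let β1 : k0 := algebraMap (MvPolynomial (Fin 2) ℚ) k0 (X 0)
    let β2 : k0 := algebraMap (MvPolynomial (Fin 2) ℚ) k0 (X 1)
    let a1 : LaurentSeries k0 := HahnSeries.single (2 : ℤ) β1
    let a2 : LaurentSeries k0 := HahnSeries.single (2 : ℤ) β2
    let α : Fin 3 → L := fun i =>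
      algebraMap Q L (Ideal.Quotient.mk _ (X i))
    ∃ φ : L →+* LaurentSeries k0,
      Function.Injective φ ∧
      φ (α 0) = a1 ∧ φ (α 1) = a2 ∧ φ (α 2) = -(a1 + a2) / (1 + a1 * a2) := by
  intro Q L k0' β1 β2 a1' a2' α
  have hker : ∀ a ∈ Ideal.span {(X 0 + X 1 + X 2 + X 0 * X 1 * X 2 : MvPolynomial (Fin 3) ℚ)},
      ψ.toRingHom a = 0 := by
    intro a ha
    rw [show Ideal.span {(X 0 + X 1 + X 2 + X 0 * X 1 * X 2 : MvPolynomial (Fin 3) ℚ)}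
      = Ideal.span {fpoly} from rfl, Ideal.mem_span_singleton] at ha
    obtain ⟨c, rfl⟩ := ha
    show ψ (fpoly * c) = 0
    rw [map_mul, psi_f, zero_mul]
  let ψbar : Q →+* K := Ideal.Quotient.lift _ ψ.toRingHom hker
  have hinj : Function.Injective ψbar := by
    rw [injective_iff_map_eq_zero]
    intro q hq
    obtain ⟨p, rfl⟩ := Ideal.Quotient.mk_surjective q
    rw [Ideal.Quotient.lift_mk] at hq
    exact Ideal.Quotient.eq_zero_iff_mem.mpr (ker_psi p hq)
  haveI : IsDomain Q := Function.Injective.isDomain ψbar hinj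
  letI : Field L := FractionRing.field Q
  let φ : L →+* K := IsFractionRing.lift hinj
  refine ⟨φ, φ.injective, ?_, ?_, ?_⟩
  · show φ (algebraMap Q L (Ideal.Quotient.mk _ (X 0))) = a1'
    rw [show (φ : L →+* K) = IsFractionRing.lift hinj from rfl]
    rw [IsFractionRing.lift_algebraMap, Ideal.Quotient.lift_mk]
    show ψ (X 0) = a1'
    rw [ψ, MvPolynomial.aeval_X]
    rfl
  · show φ (algebraMap Q L (Ideal.Quotient.mk _ (X 1))) = a2'
    rw [show (φ : L →+* K) = IsFractionRing.lift hinj from rfl]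
    rw [IsFractionRing.lift_algebraMap, Ideal.Quotient.lift_mk]
    show ψ (X 1) = a2'
    rw [ψ, MvPolynomial.aeval_X]
    rfl
  · show φ (algebraMap Q L (Ideal.Quotient.mk _ (X 2))) = -(a1' + a2') / (1 + a1' * a2')
    rw [show (φ : L →+* K) = IsFractionRing.lift hinj from rfl]
    rw [IsFractionRing.lift_algebraMap, Ideal.Quotient.lift_mk]
    show ψ (X 2) = -(a1' + a2') / (1 + a1' * a2')
    rw [ψ, MvPolynomial.aeval_X]
    rfl

end Main
end

section
/- For the Sklyanin Poisson bracket on ℝ = k_0[x_0,x_1,x_2,x_3], the top form δ = dx_1∧dx_2∧dx_3∧dx_0 is a cycle of the Poisson boundary: ∂_4(δ) = 0 in Ω³(ℝ). -/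
open MvPolynomial

variable (k0 : Type*) [Field k0] [CharZero k0]

local notation "R" => MvPolynomial (Fin 4) k0

/-- The element `F₀ dF₁∧···∧dFₙ` of `Ωⁿ(ℛ) = ⋀[ℛ]ⁿ Ω[ℛ⁄k₀]`. -/
noncomputable def wform (n : ℕ) (F0 : R) (v : Fin n → Ω[R⁄k0]) :
    ⋀[R]^n (Ω[R⁄k0]) :=
  ⟨F0 • ExteriorAlgebra.ιMulti R n v,
    Submodule.smul_mem _ _ (ExteriorAlgebra.ιMulti_range R n (Set.mem_range_self v))⟩

set_option synthInstance.maxHeartbeats 1000000 in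
set_option maxHeartbeats 1000000 in
set_option linter.unusedSectionVars false in
lemma wform_zero (n : ℕ) (v : Fin n → Ω[R⁄k0]) : wform k0 n 0 v = 0 := by
  apply Subtype.ext
  simp [wform]

set_option synthInstance.maxHeartbeats 1000000 in
set_option maxHeartbeats 1000000 in
set_option linter.unusedSectionVars false in
lemma wform_key (r s : R) (a b : Ω[R⁄k0]) :
    wform k0 3 1 ![r • a + s • b, a, b] = 0 := by
  apply Subtype.ext
  have h1 : (ExteriorAlgebra.ιMulti R 3).toMultilinearMap (Fin.cons a ![a, b]) = 0 := by
    refine (ExteriorAlgebra.ιMulti R 3).map_eq_zero_of_eq _ (i := 0) (j := 1) rfl (by decide)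
  have h2 : (ExteriorAlgebra.ιMulti R 3).toMultilinearMap (Fin.cons b ![a, b]) = 0 := by
    refine (ExteriorAlgebra.ιMulti R 3).map_eq_zero_of_eq _ (i := 0) (j := 2) rfl (by decide)
  show (1:R) • (ExteriorAlgebra.ιMulti R 3).toMultilinearMap (Fin.cons (r • a + s • b) ![a, b]) = 0
  rw [one_smul, MultilinearMap.cons_add, MultilinearMap.cons_smul, MultilinearMap.cons_smul,
    h1, h2, smul_zero, smul_zero, add_zero]

set_option synthInstance.maxHeartbeats 1000000 in
set_option maxHeartbeats 1000000 in
set_option linter.unusedSectionVars false in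
lemma wform_key' (r s : R) (a b : Ω[R⁄k0]) :
    wform k0 3 1 ![r • b + s • a, a, b] = 0 := by
  rw [show r • b + s • a = s • a + r • b from add_comm _ _]
  exact wform_key k0 s r a b

set_option synthInstance.maxHeartbeats 1000000 in
set_option maxHeartbeats 1000000 in
set_option linter.unusedSectionVars false in
lemma D_C_mul (c : k0) (a b : R) :
    KaehlerDifferential.D k0 R (C c * (a * b)) =
      (C c * a) • KaehlerDifferential.D k0 R b + (C c * b) • KaehlerDifferential.D k0 R a := by
  have h0 : KaehlerDifferential.D k0 R (C c) = 0 := by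
    rw [← MvPolynomial.algebraMap_eq]
    exact Derivation.map_algebraMap _ c
  rw [Derivation.leibniz, Derivation.leibniz, h0, smul_zero, add_zero, smul_add, smul_smul,
    smul_smul]

set_option synthInstance.maxHeartbeats 1000000 in
set_option maxHeartbeats 1000000 in
set_option linter.unusedSectionVars false in
lemma D_C_mul_neg (c : k0) (a b : R) :
    KaehlerDifferential.D k0 R (-(C c * (a * b))) =
      (-(C c * a)) • KaehlerDifferential.D k0 R b + (-(C c * b)) • KaehlerDifferential.D k0 R a := by
  rw [map_neg, D_C_mul, neg_add, neg_smul, neg_smul]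

set_option synthInstance.maxHeartbeats 1000000 in
set_option maxHeartbeats 1000000 in
/-- For the Sklyanin Poisson bracket on `ℛ = k₀[x₀,x₁,x₂,x₃]`, the top form
`δ = dx₁∧dx₂∧dx₃∧dx₀` is a cycle of the Poisson boundary: `∂₄(δ) = 0`. -/
theorem sklyanin_delta_is_poisson_cycle
    (β1 β2 β3 : k0) (hβ : β1 + β2 + β3 = 0)
    (br : R →ₗ[k0] R →ₗ[k0] R)
    (hskew : ∀ f g : R, br f g = - br g f)
    (hleib : ∀ f g h : R, br f (g * h) = g * br f h + br f g * h)
    (h01 : br (X 0) (X 1) = C (-2 * β1) * (X 2 * X 3))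
    (h02 : br (X 0) (X 2) = C (-2 * β2) * (X 3 * X 1))
    (h03 : br (X 0) (X 3) = C (-2 * β3) * (X 1 * X 2))
    (h12 : br (X 1) (X 2) = C (-2 : k0) * (X 0 * X 3))
    (h23 : br (X 2) (X 3) = C (-2 : k0) * (X 0 * X 1))
    (h31 : br (X 3) (X 1) = C (-2 : k0) * (X 0 * X 2))
    (d4 : (⋀[R]^4 (Ω[R⁄k0])) →ₗ[k0] (⋀[R]^3 (Ω[R⁄k0])))
    (hd4 : ∀ F0 F1 F2 F3 F4 : R,
      letI D := KaehlerDifferential.D k0 R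
      d4 (wform k0 4 F0 ![D F1, D F2, D F3, D F4]) =
        wform k0 3 (br F0 F1) ![D F2, D F3, D F4]
          - wform k0 3 (br F0 F2) ![D F1, D F3, D F4]
          + wform k0 3 (br F0 F3) ![D F1, D F2, D F4]
          - wform k0 3 (br F0 F4) ![D F1, D F2, D F3]
          - wform k0 3 F0 ![D (br F1 F2), D F3, D F4]
          + wform k0 3 F0 ![D (br F1 F3), D F2, D F4]
          - wform k0 3 F0 ![D (br F1 F4), D F2, D F3]
          - wform k0 3 F0 ![D (br F2 F3), D F1, D F4]
          + wform k0 3 F0 ![D (br F2 F4), D F1, D F3]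
          - wform k0 3 F0 ![D (br F3 F4), D F1, D F2]) :
    letI D := KaehlerDifferential.D k0 R
    d4 (wform k0 4 1 ![D (X 1), D (X 2), D (X 3), D (X 0)]) = 0 := by
  have hbr1 : ∀ f : R, br f 1 = 0 := by
    intro f
    have h := hleib f 1 1
    rw [one_mul, one_mul, mul_one] at h
    exact (right_eq_add.mp h)
  have hb : ∀ f : R, br (1 : R) f = 0 := fun f => by rw [hskew, hbr1, neg_zero]
  have k13 : br (X 1) (X 3) = -(C (-2 : k0) * (X 0 * X 2)) := by rw [hskew, h31]
  have k10 : br (X 1) (X 0) = -(C (-2 * β1) * (X 2 * X 3)) := by rw [hskew, h01]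
  have k20 : br (X 2) (X 0) = -(C (-2 * β2) * (X 3 * X 1)) := by rw [hskew, h02]
  have k30 : br (X 3) (X 0) = -(C (-2 * β3) * (X 1 * X 2)) := by rw [hskew, h03]
  rw [hd4, hb, hb, hb, hb, h12, k13, k10, h23, k20, k30,
    D_C_mul, D_C_mul_neg, D_C_mul_neg, D_C_mul, D_C_mul_neg, D_C_mul_neg]
  rw [wform_zero, wform_zero, wform_zero, wform_zero,
    wform_key, wform_key, wform_key', wform_key, wform_key, wform_key']
  abel
end
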